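/- Each matrix S(a,b), M'(λ), and T preserves the set O, i.e., for each generator g of Sz(q) and each point P in O, the point P·g lies in O. Here O = {(1:0:0:0)} ∪ {(ab + a^(t+2) + b^t : b : a : 1) : a, b in F_q} ⊆ P^3(F_q). -/

import Mathlib

open Matrix

noncomputable section

/-- The matrix `S(a, b)` generating the Frobenius kernel of a point stabiliser in `Sz(q)`. -/
def Smat {F : Type*} [Field F] (t : ℕ) (a b : F) : Matrix (Fin 4) (Fin 4) F :=
  !![1, 0, 0, 0;
     a, 1, 0, 0;
     b, a ^ t, 1, 0;
     a ^ (2 + t) + a * b + b ^ t, a ^ (1 + t) + b, a, 1]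

/-- The diagonal matrix `M'(λ) = diag(λ^(t+1), λ, λ⁻¹, λ^(-t-1))`. -/
def Mmat {F : Type*} [Field F] (t : ℕ) (u : Fˣ) : Matrix (Fin 4) (Fin 4) F :=
  !![(u : F) ^ (t + 1), 0, 0, 0;
     0, (u : F), 0, 0;
     0, 0, ((u⁻¹ : Fˣ) : F), 0;
     0, 0, 0, ((u⁻¹ : Fˣ) : F) ^ (t + 1)]

/-- The antidiagonal permutation matrix `T`. -/
def Tmat (F : Type*) [Field F] : Matrix (Fin 4) (Fin 4) F :=
  !![0, 0, 0, 1;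
     0, 0, 1, 0;
     0, 1, 0, 0;
     1, 0, 0, 0]
/-- The Suzuki ovoid `O ⊆ P³(F_q)`:
`{(1:0:0:0)} ∪ {(ab + a^(t+2) + bᵗ : b : a : 1) : a, b ∈ F_q}`. -/
def ovoid (F : Type*) [Field F] (t : ℕ) : Set (Projectivization F (Fin 4 → F)) :=
  {P | (∃ h : (![1, 0, 0, 0] : Fin 4 → F) ≠ 0,
          P = Projectivization.mk F ![1, 0, 0, 0] h) ∨
       (∃ a b : F, ∃ h : (![a * b + a ^ (t + 2) + b ^ t, b, a, 1] : Fin 4 → F) ≠ 0,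
          P = Projectivization.mk F ![a * b + a ^ (t + 2) + b ^ t, b, a, 1] h)}

namespace SuzukiAux

variable {F : Type*} [Field F] {t : ℕ}

lemma frob_pow (htwo : (2:F) = 0) (n : ℕ) :
    ∀ x y : F, (x+y)^(2^n) = x^(2^n) + y^(2^n) := by
  induction n with
  | zero => intro x y; simp
  | succ n ih =>
    intro x y
    rw [pow_succ, pow_mul, pow_mul, pow_mul, ih]
    linear_combination (x^(2^n)*y^(2^n))*htwo

lemma hCt_lemma (hfrob : ∀ x y : F, (x+y)^t = x^t + y^t)
    (hsq : ∀ x : F, (x^t)^t = x^2) (a b : F) :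
    (a*b + a^(t+2) + b^t)^t = a^t*b^t + a^2*(a^t)^2 + b^2 := by
  rw [hfrob, hfrob, mul_pow, pow_right_comm a (t+2) t, pow_add, hsq, hsq]

lemma fzero_lemma (ht : 0 < t) (htwo : (2:F) = 0)
    (hfrob : ∀ x y : F, (x+y)^t = x^t + y^t)
    (hsq : ∀ x : F, (x^t)^t = x^2) (a b : F)
    (h : a*b + a^(t+2) + b^t = 0) : a = 0 ∧ b = 0 := by
  have h2' : a^t*b^t + a^2*(a^t)^2 + b^2 = 0 := by
    rw [← hCt_lemma hfrob hsq a b, h, zero_pow ht.ne']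
  have hb : b*(a*a^t + b) = 0 := by
    linear_combination (a^t)*h + h2' - (a^2*(a^t)^2 + a^t*b^t)*htwo
  rcases mul_eq_zero.mp hb with hb0 | hab
  · subst hb0
    have h4 : a^(t+2) = 0 := by
      rw [zero_pow ht.ne'] at h; linear_combination h
    exact ⟨by simpa using pow_eq_zero_iff (by omega : t + 2 ≠ 0) |>.mp h4, rfl⟩
  · have hb' : b = a*a^t := by linear_combination hab - a*a^t*htwo
    rw [hb', mul_pow, hsq] at h
    have h4 : a^(t+2) = 0 := by linear_combination h - a^(t+2)*htwo
    have ha : a = 0 := by simpa using pow_eq_zero_iff (by omega : t + 2 ≠ 0) |>.mp h4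
    exact ⟨ha, by rw [hb', ha, zero_mul]⟩

lemma Sid_lemma (htwo : (2:F) = 0)
    (hfrob : ∀ x y : F, (x+y)^t = x^t + y^t)
    (hsq : ∀ x : F, (x^t)^t = x^2) (a b a' b' : F) :
    (a'*b' + a'^(t+2) + b'^t) + b'*a + a'*b + (a^(2+t)+a*b+b^t)
      = (a'+a)*(b' + a'*a^t + (a^(1+t)+b)) + (a'+a)^(t+2)
        + (b' + a'*a^t + (a^(1+t)+b))^t := by
  have e1 : (a'+a)^(t+2) = (a'^t+a^t)*(a'+a)^2 := by rw [pow_add, hfrob]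
  have e2 : (b' + a'*a^t + (a^(1+t)+b))^t
      = b'^t + a'^t*a^2 + (a^t*a^2 + b^t) := by
    rw [hfrob, hfrob, hfrob, mul_pow, hsq, pow_add, pow_one, mul_pow, hsq]
  rw [e1, e2]
  linear_combination (-(a'^2*a^t) - a*a'*a'^t - 2*(a*a'*a^t) - a^2*a'^t - a^2*a^t)*htwo

lemma Tid_lemma (htwo : (2:F) = 0)
    (hfrob : ∀ x y : F, (x+y)^t = x^t + y^t)
    (hsq : ∀ x : F, (x^t)^t = x^2) (a b : F)
    (hc : a*b + a^(t+2) + b^t ≠ 0) :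
    (a*b + a^(t+2) + b^t) * ((b*(a*b + a^(t+2) + b^t)⁻¹)*(a*(a*b + a^(t+2) + b^t)⁻¹)
      + (b*(a*b + a^(t+2) + b^t)⁻¹)^(t+2) + (a*(a*b + a^(t+2) + b^t)⁻¹)^t) = 1 := by
  set c := a*b + a^(t+2) + b^t with hcdef
  have hC : c^t = a^t*b^t + a^2*(a^t)^2 + b^2 := by
    rw [hcdef, hfrob, hfrob, mul_pow, pow_right_comm a (t+2) t, pow_add, hsq, hsq]
  have key : a*b*c^t + b^(t+2) + a^t*c^2 = c^(t+1) := by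
    linear_combination (a*b - c)*hC + (a^t*(c + (a*b + a^2*a^t + b^t))
      - (a^t*b^t + a^2*(a^t)^2 + b^2))*hcdef + (a*b*a^t*b^t + a^3*b*(a^t)^2)*htwo
  have hct : c^t ≠ 0 := pow_ne_zero _ hc
  have expand : (b*c⁻¹)*(a*c⁻¹) + (b*c⁻¹)^(t+2) + (a*c⁻¹)^t
      = (a*b*c^t + b^(t+2) + a^t*c^2) / c^(t+2) := by
    rw [mul_pow, mul_pow, inv_pow, inv_pow]
    have h1 : c^(t+2) ≠ 0 := pow_ne_zero _ hc
    field_simp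
    ring
  rw [expand, key]
  field_simp
  ring

lemma mem_ovoid_left {w : Fin 4 → F} (hw : w ≠ 0) (hww : w = ![1,0,0,0]) :
    Projectivization.mk F w hw ∈ ovoid F t := by
  subst hww; exact Or.inl ⟨hw, rfl⟩

lemma mem_ovoid_right (a b : F) {w : Fin 4 → F} (hw : w ≠ 0)
    (hww : w = ![a*b + a^(t+2) + b^t, b, a, 1]) :
    Projectivization.mk F w hw ∈ ovoid F t := by
  subst hww; exact Or.inr ⟨a, b, hw, rfl⟩

lemma reduce_step (g : Matrix (Fin 4) (Fin 4) F) (v w : Fin 4 → F)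
    (hv : v ≠ 0) (hw : w ≠ 0)
    (hvw : Projectivization.mk F v hv = Projectivization.mk F w hw)
    (h : ∃ hw2 : Matrix.vecMul w g ≠ 0,
        Projectivization.mk F (Matrix.vecMul w g) hw2 ∈ ovoid F t) :
    ∃ hv2 : Matrix.vecMul v g ≠ 0,
        Projectivization.mk F (Matrix.vecMul v g) hv2 ∈ ovoid F t := by
  obtain ⟨hw2, hmem⟩ := h
  obtain ⟨u, hu⟩ := (Projectivization.mk_eq_mk_iff F v w hv hw).mp hvw
  have hvg : Matrix.vecMul v g = (u:F) • (Matrix.vecMul w g) := by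
    rw [← hu, Units.smul_def, Matrix.smul_vecMul]
  have hne : Matrix.vecMul v g ≠ 0 := by
    rw [hvg]; exact smul_ne_zero u.ne_zero hw2
  refine ⟨hne, ?_⟩
  have heq : Projectivization.mk F (Matrix.vecMul v g) hne
      = Projectivization.mk F (Matrix.vecMul w g) hw2 :=
    (Projectivization.mk_eq_mk_iff F _ _ hne hw2).mpr ⟨u, by rw [hvg, Units.smul_def]⟩
  rw [heq]; exact hmem

end SuzukiAux

open SuzukiAux in
/-- Each generator `S(a,b)`, `M'(λ)`, `T` of `Sz(q)` preserves the ovoid `O` under the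
action by right multiplication on row vectors. -/
theorem generators_preserve_ovoid (m : ℕ) (F : Type*) [Field F] [Fintype F]
    (hF : Fintype.card F = 2 ^ (2 * m + 1))
    (g : Matrix (Fin 4) (Fin 4) F)
    (hg : (∃ a b : F, g = Smat (2 ^ (m + 1)) a b) ∨
          (∃ u : Fˣ, g = Mmat (2 ^ (m + 1)) u) ∨ g = Tmat F) :
    ∀ (v : Fin 4 → F) (hv : v ≠ 0),
      Projectivization.mk F v hv ∈ ovoid F (2 ^ (m + 1)) →
      ∃ hw : Matrix.vecMul v g ≠ 0,
        Projectivization.mk F (Matrix.vecMul v g) hw ∈ ovoid F (2 ^ (m + 1)) := by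
  intro v hv hmem
  have htpos : 0 < 2 ^ (m + 1) := Nat.pow_pos (by norm_num)
  have htwo : (2:F) = 0 := by
    have h0 : ((Fintype.card F : ℕ) : F) = 0 := FiniteField.cast_card_eq_zero F
    rw [hF] at h0
    push_cast at h0
    exact pow_eq_zero_iff (by omega) |>.mp h0
  have hfrob : ∀ x y : F, (x+y)^(2^(m+1)) = x^(2^(m+1)) + y^(2^(m+1)) :=
    frob_pow htwo (m+1)
  have hsq : ∀ x : F, (x^(2^(m+1)))^(2^(m+1)) = x^2 := by
    intro x
    rw [← pow_mul, show 2^(m+1)*2^(m+1) = 2^(2*m+1)*2 by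
      rw [← pow_add, ← pow_succ]; congr 1; omega]
    rw [pow_mul, ← hF, FiniteField.pow_card]
  set t : ℕ := 2 ^ (m + 1) with htdef
  -- the two possible representatives of the point
  rcases hmem with ⟨h1, heq⟩ | ⟨a', b', h1, heq⟩
  · -- v ~ (1:0:0:0)
    refine reduce_step g v _ hv h1 heq ?_
    rcases hg with ⟨a, b, rfl⟩ | ⟨u, rfl⟩ | rfl
    · have hcomp : Matrix.vecMul ![(1:F),0,0,0] (Smat t a b) = ![1,0,0,0] := by
        funext i; fin_cases i <;>
          simp [Smat, Matrix.vecMul, dotProduct, Fin.sum_univ_four]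
      have hne : Matrix.vecMul ![(1:F),0,0,0] (Smat t a b) ≠ 0 := by
        rw [hcomp]; exact h1
      exact ⟨hne, mem_ovoid_left hne hcomp⟩
    · have hcomp : Matrix.vecMul ![(1:F),0,0,0] (Mmat t u) = ![(u:F)^(t+1),0,0,0] := by
        funext i; fin_cases i <;>
          simp [Mmat, Matrix.vecMul, dotProduct, Fin.sum_univ_four]
      have hne : Matrix.vecMul ![(1:F),0,0,0] (Mmat t u) ≠ 0 := by
        rw [hcomp]; intro h0; have := congrFun h0 0
        simp [pow_ne_zero _ u.ne_zero] at this
      refine ⟨hne, Or.inl ⟨h1, ?_⟩⟩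
      refine (Projectivization.mk_eq_mk_iff F _ _ hne h1).mpr ⟨u^(t+1), ?_⟩
      rw [hcomp]
      funext i; fin_cases i <;> simp [Units.smul_def]
    · have hcomp : Matrix.vecMul ![(1:F),0,0,0] (Tmat F) = ![0,0,0,1] := by
        funext i; fin_cases i <;>
          simp [Tmat, Matrix.vecMul, dotProduct, Fin.sum_univ_four]
      have hne : Matrix.vecMul ![(1:F),0,0,0] (Tmat F) ≠ 0 := by
        rw [hcomp]; intro h0; have := congrFun h0 3; simp at this
      refine ⟨hne, mem_ovoid_right 0 0 hne ?_⟩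
      rw [hcomp]; funext i; fin_cases i <;> simp [zero_pow htpos.ne']
  · -- v ~ (a'b' + a'^(t+2) + b'^t : b' : a' : 1)
    refine reduce_step g v _ hv h1 heq ?_
    rcases hg with ⟨a, b, rfl⟩ | ⟨u, rfl⟩ | rfl
    · -- S(a,b)
      set a2 : F := a' + a with ha2
      set b2 : F := b' + a'*a^t + (a^(1+t)+b) with hb2
      have hcomp : Matrix.vecMul ![a'*b' + a'^(t+2) + b'^t, b', a', 1] (Smat t a b)
          = ![a2*b2 + a2^(t+2) + b2^t, b2, a2, 1] := by
        funext i; fin_cases i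
        · simp only [Smat, Matrix.vecMul, dotProduct, Fin.sum_univ_four]
          simp [ha2, hb2]
          linear_combination Sid_lemma htwo hfrob hsq a b a' b'
        · simp [Smat, Matrix.vecMul, dotProduct, Fin.sum_univ_four, hb2]
        · simp [Smat, Matrix.vecMul, dotProduct, Fin.sum_univ_four, ha2]
        · simp [Smat, Matrix.vecMul, dotProduct, Fin.sum_univ_four]
      have hne : Matrix.vecMul ![a'*b' + a'^(t+2) + b'^t, b', a', 1] (Smat t a b) ≠ 0 := by
        rw [hcomp]; intro h0; have := congrFun h0 3; simp at this
      exact ⟨hne, mem_ovoid_right a2 b2 hne hcomp⟩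
    · -- M(u)
      set x : F := (u : F) with hx
      have hxne : x ≠ 0 := u.ne_zero
      set a2 : F := a' * x^t with ha2
      set b2 : F := b' * x^(t+2) with hb2
      have hcomp : Matrix.vecMul ![a'*b' + a'^(t+2) + b'^t, b', a', 1] (Mmat t u)
          = ![(a'*b' + a'^(t+2) + b'^t)*x^(t+1), b'*x, a'*x⁻¹, (x⁻¹)^(t+1)] := by
        funext i; fin_cases i <;>
          simp [Mmat, Matrix.vecMul, dotProduct, Fin.sum_univ_four,
            Units.val_inv_eq_inv_val, Matrix.vecHead, Matrix.vecTail, hx]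
      have hne : Matrix.vecMul ![a'*b' + a'^(t+2) + b'^t, b', a', 1] (Mmat t u) ≠ 0 := by
        rw [hcomp]; intro h0
        exact pow_ne_zero (t+1) (inv_ne_zero hxne) (by simpa using congrFun h0 3)
      refine ⟨hne, ?_⟩
      have hne2 : (![a2*b2 + a2^(t+2) + b2^t, b2, a2, 1] : Fin 4 → F) ≠ 0 := by
        intro h0; have := congrFun h0 3; simp at this
      have hid : a2*b2 + a2^(t+2) + b2^t
          = (a'*b' + a'^(t+2) + b'^t) * (x^(t+1))^2 := by
        rw [ha2, hb2, mul_pow, mul_pow, pow_right_comm x (t+2) t]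
        simp only [pow_add, pow_one, hsq]
        ring
      have hmk : Projectivization.mk F _ hne
          = Projectivization.mk F ![a2*b2 + a2^(t+2) + b2^t, b2, a2, 1] hne2 := by
        refine (Projectivization.mk_eq_mk_iff F _ _ hne hne2).mpr ⟨(u^(t+1))⁻¹, ?_⟩
        rw [hcomp]
        have hyne : x^(t+1) ≠ 0 := pow_ne_zero _ hxne
        have hsmul : ((u^(t+1))⁻¹ : Fˣ) • (![a2*b2 + a2^(t+2) + b2^t, b2, a2, 1] : Fin 4 → F)
            = ![(x^(t+1))⁻¹ * (a2*b2 + a2^(t+2) + b2^t), (x^(t+1))⁻¹ * b2,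
                (x^(t+1))⁻¹ * a2, (x^(t+1))⁻¹ * 1] := by
          funext i; fin_cases i <;>
            simp [Units.smul_def, Units.val_inv_eq_inv_val, ← hx, Matrix.vecHead,
              Matrix.vecTail, mul_add]
        have k0 : (x^(t+1))⁻¹ * (a2*b2 + a2^(t+2) + b2^t)
            = (a'*b' + a'^(t+2) + b'^t)*x^(t+1) := by
          rw [hid]; field_simp
        have k1 : (x^(t+1))⁻¹ * b2 = b'*x := by rw [hb2]; field_simp; ring
        have k2 : (x^(t+1))⁻¹ * a2 = a'*x⁻¹ := by rw [ha2]; field_simp; ring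
        have k3 : (x^(t+1))⁻¹ * 1 = (x⁻¹)^(t+1) := by rw [inv_pow, mul_one]
        rw [hsmul, k0, k1, k2, k3]
      rw [hmk]
      exact mem_ovoid_right a2 b2 hne2 rfl
    · -- T
      have hcomp : Matrix.vecMul ![a'*b' + a'^(t+2) + b'^t, b', a', 1] (Tmat F)
          = ![1, a', b', a'*b' + a'^(t+2) + b'^t] := by
        funext i; fin_cases i <;>
          simp [Tmat, Matrix.vecMul, dotProduct, Fin.sum_univ_four,
            Matrix.vecHead, Matrix.vecTail]
      have hne : Matrix.vecMul ![a'*b' + a'^(t+2) + b'^t, b', a', 1] (Tmat F) ≠ 0 := by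
        rw [hcomp]; intro h0; have := congrFun h0 0; simp at this
      refine ⟨hne, ?_⟩
      by_cases h0 : a'*b' + a'^(t+2) + b'^t = 0
      · obtain ⟨ha0, hb0⟩ := fzero_lemma htpos htwo hfrob hsq a' b' h0
        refine mem_ovoid_left hne ?_
        rw [hcomp, ha0, hb0]
        funext i; fin_cases i <;> simp [zero_pow htpos.ne']
      · set c : F := a'*b' + a'^(t+2) + b'^t with hc
        set a2 : F := b' * c⁻¹ with ha2
        set b2 : F := a' * c⁻¹ with hb2
        have hne2 : (![a2*b2 + a2^(t+2) + b2^t, b2, a2, 1] : Fin 4 → F) ≠ 0 := by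
          intro hh; have := congrFun hh 3; simp at this
        have hmk : Projectivization.mk F _ hne
            = Projectivization.mk F ![a2*b2 + a2^(t+2) + b2^t, b2, a2, 1] hne2 := by
          refine (Projectivization.mk_eq_mk_iff F _ _ hne hne2).mpr
            ⟨Units.mk0 c h0, ?_⟩
          rw [hcomp]
          have hsmul : (Units.mk0 c h0) • (![a2*b2 + a2^(t+2) + b2^t, b2, a2, 1] : Fin 4 → F)
              = ![c * (a2*b2 + a2^(t+2) + b2^t), c * b2, c * a2, c * 1] := by
            funext i; fin_cases i <;>
              simp [Units.smul_def, Matrix.vecHead, Matrix.vecTail, mul_add]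
          have k0 : c * (a2*b2 + a2^(t+2) + b2^t) = 1 := by
            rw [ha2, hb2, hc]
            linear_combination Tid_lemma htwo hfrob hsq a' b' h0
          have k1 : c * b2 = a' := by rw [hb2]; field_simp
          have k2 : c * a2 = b' := by rw [ha2]; field_simp
          rw [hsmul, k0, k1, k2, mul_one]
        rw [hmk]
        exact mem_ovoid_right a2 b2 hne2 rfl
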